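/- Let A : ℝ → ℝ be continuously differentiable, suppose there is a₀ > 0 with A(x) ≥ a₀ for all x ∈ ℝ, suppose ∫_ℝ (1 + |t|)·|A′(t)| dt < ∞, and let A₊ = lim_{x→+∞} A(x) and A₋ = lim_{x→−∞} A(x). Then there exists a differentiable function r₀ : ℝ → ℝ with r₀(x) > 0 for all x, r₀ bounded on ℝ, satisfying r₀′(x) = A(x)/r₀(x) − 1 for all x ∈ ℝ, and such that r₀(x) → A₊ as x → +∞ and r₀(x) → A₋ as x → −∞. -/

import Mathlib

open MeasureTheory Filter

section AcousticWHhelpers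

open Set

/-- Mean value theorem wrapper for globally differentiable functions. -/
private lemma AcousticWH.mvt {f d : ℝ → ℝ} (hf : ∀ x, HasDerivAt f (d x) x) {a b : ℝ}
    (hab : a < b) : ∃ c ∈ Ioo a b, d c = (f b - f a) / (b - a) :=
  exists_hasDerivAt_eq_slope f d hab
    (fun x _ => (hf x).continuousAt.continuousWithinAt) (fun x _ => hf x)

private lemma AcousticWH.cont {f d : ℝ → ℝ} (hf : ∀ x, HasDerivAt f (d x) x) :
    Continuous f :=
  continuous_iff_continuousAt.mpr fun x => (hf x).continuousAt

/-- Forward upper barrier: if the vector field is strictly negative on the barrier,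
a solution starting below stays below. -/
private lemma AcousticWH.barrier_fwd {f d : ℝ → ℝ} (hf : ∀ x, HasDerivAt f (d x) x) {b s : ℝ}
    (hb : ∀ x, s ≤ x → f x = b → d x < 0) (hs : f s ≤ b) :
    ∀ x, s ≤ x → f x ≤ b := by
  intro z hz
  by_contra hgt
  push_neg at hgt
  have hsz : s < z := by
    rcases eq_or_lt_of_le hz with h | h
    · exact absurd (h ▸ hs) (not_le.mpr hgt)
    · exact h
  set S : Set ℝ := Icc s z ∩ f ⁻¹' Iic b with hS
  have hScomp : IsCompact S :=
    isCompact_Icc.inter_right (isClosed_Iic.preimage (AcousticWH.cont hf))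
  have hSne : S.Nonempty := ⟨s, ⟨le_rfl, hsz.le⟩, hs⟩
  set T := sSup S with hT
  have hTS : T ∈ S := hScomp.sSup_mem hSne
  have hTz : T < z := lt_of_le_of_ne hTS.1.2 (by
    intro h
    exact absurd (h ▸ hTS.2 : f z ≤ b) (not_le.mpr hgt))
  have habove : ∀ x, T < x → x ≤ z → b < f x := by
    intro x hx1 hx2
    by_contra hxb
    push_neg at hxb
    have hxS : x ∈ S := ⟨⟨hTS.1.1.trans hx1.le, hx2⟩, hxb⟩
    exact absurd (le_csSup hScomp.bddAbove hxS) (not_le.mpr hx1)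
  have hfT : f T = b := by
    refine le_antisymm hTS.2 ?_
    have hcont : Tendsto f (nhdsWithin T (Ioi T)) (nhds (f T)) :=
      ((hf T).continuousAt.continuousWithinAt)
    refine ge_of_tendsto hcont ?_
    filter_upwards [Ioo_mem_nhdsGT_of_mem (⟨le_rfl, hTz⟩ : T ∈ Ico T z)] with x hx
    exact (habove x hx.1 hx.2.le).le
  have hdT : d T < 0 := hb T hTS.1.1 hfT
  have hslope : Tendsto (slope f T) (nhdsWithin T {T}ᶜ) (nhds (d T)) :=
    hasDerivAt_iff_tendsto_slope.mp (hf T)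
  have hslope' : Tendsto (slope f T) (nhdsWithin T (Ioi T)) (nhds (d T)) :=
    hslope.mono_left (nhdsWithin_mono _ (fun x hx => ne_of_gt hx))
  have hev : ∀ᶠ x in nhdsWithin T (Ioi T), slope f T x < 0 :=
    hslope'.eventually_lt_const hdT
  have hmem : ∀ᶠ x in nhdsWithin T (Ioi T), x ∈ Ioo T z :=
    Ioo_mem_nhdsGT_of_mem (⟨le_rfl, hTz⟩ : T ∈ Ico T z)
  obtain ⟨x, hx1, hx2⟩ := (hev.and hmem).exists
  have hxT : T < x := hx2.1
  have h3 : (f x - f T) / (x - T) < 0 := by rwa [slope_def_field] at hx1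
  have h4 : 0 < x - T := sub_pos.mpr hxT
  have h5 : f x < f T := by
    rcases div_neg_iff.mp h3 with ⟨h6, h7⟩ | ⟨h6, h7⟩
    · linarith
    · linarith
  exact absurd (habove x hxT hx2.2.le) (not_lt.mpr (hfT ▸ h5.le))

/-- Backward "stay above" barrier. -/
private lemma AcousticWH.barrier_bwd {f d : ℝ → ℝ} (hf : ∀ x, HasDerivAt f (d x) x) {b s : ℝ}
    (hb : ∀ x, x ≤ s → f x = b → d x < 0) (hs : b ≤ f s) :
    ∀ x, x ≤ s → b ≤ f x := by
  intro z hz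
  by_contra hgt
  push_neg at hgt
  have hsz : z < s := by
    rcases eq_or_lt_of_le hz with h | h
    · exact absurd (h ▸ hgt) (not_lt.mpr hs)
    · exact h
  set S : Set ℝ := Icc z s ∩ f ⁻¹' Ici b with hS
  have hScomp : IsCompact S :=
    isCompact_Icc.inter_right (isClosed_Ici.preimage (AcousticWH.cont hf))
  have hSne : S.Nonempty := ⟨s, ⟨hsz.le, le_rfl⟩, hs⟩
  set T := sInf S with hT
  have hTS : T ∈ S := hScomp.sInf_mem hSne
  have hTz : z < T := lt_of_le_of_ne hTS.1.1 (by
    intro h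
    exact absurd (h ▸ hTS.2 : b ≤ f z) (not_le.mpr hgt))
  have hbelow : ∀ x, z ≤ x → x < T → f x < b := by
    intro x hx1 hx2
    by_contra hxb
    push_neg at hxb
    have hxS : x ∈ S := ⟨⟨hx1, hx2.le.trans hTS.1.2⟩, hxb⟩
    exact absurd (csInf_le hScomp.bddBelow hxS) (not_le.mpr hx2)
  have hfT : f T = b := by
    refine le_antisymm ?_ hTS.2
    have hcont : Tendsto f (nhdsWithin T (Iio T)) (nhds (f T)) :=
      ((hf T).continuousAt.continuousWithinAt)
    refine le_of_tendsto hcont ?_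
    filter_upwards [Ioo_mem_nhdsLT_of_mem (⟨hTz, le_rfl⟩ : T ∈ Ioc z T)] with x hx
    exact (hbelow x hx.1.le hx.2).le
  have hdT : d T < 0 := hb T (hTS.1.2) hfT
  have hslope : Tendsto (slope f T) (nhdsWithin T {T}ᶜ) (nhds (d T)) :=
    hasDerivAt_iff_tendsto_slope.mp (hf T)
  have hslope' : Tendsto (slope f T) (nhdsWithin T (Iio T)) (nhds (d T)) :=
    hslope.mono_left (nhdsWithin_mono _ (fun x hx => ne_of_lt hx))
  have hev : ∀ᶠ x in nhdsWithin T (Iio T), slope f T x < 0 :=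
    hslope'.eventually_lt_const hdT
  have hmem : ∀ᶠ x in nhdsWithin T (Iio T), x ∈ Ioo z T :=
    Ioo_mem_nhdsLT_of_mem (⟨hTz, le_rfl⟩ : T ∈ Ioc z T)
  obtain ⟨x, hx1, hx2⟩ := (hev.and hmem).exists
  have hxT : x < T := hx2.2
  have h3 : (f x - f T) / (x - T) < 0 := by rwa [slope_def_field] at hx1
  have h4 : x - T < 0 := sub_neg.mpr hxT
  have h5 : f T < f x := by
    rcases div_neg_iff.mp h3 with ⟨h6, h7⟩ | ⟨h6, h7⟩
    · linarith
    · linarith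
  exact absurd (hbelow x hx2.1.le hxT) (not_lt.mpr (hfT ▸ h5.le))

/-- Forward lower barrier. -/
private lemma AcousticWH.barrier_fwd_lower {f d : ℝ → ℝ} (hf : ∀ x, HasDerivAt f (d x) x)
    {b s : ℝ} (hb : ∀ x, s ≤ x → f x = b → 0 < d x) (hs : b ≤ f s) :
    ∀ x, s ≤ x → b ≤ f x := by
  have h := AcousticWH.barrier_fwd (f := fun x => -f x) (d := fun x => -d x)
    (fun x => (hf x).neg) (b := -b) (s := s)
    (fun x hx hfx => neg_neg_iff_pos.mpr (hb x hx (by linarith [neg_inj.mp hfx])))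
    (by simpa using hs)
  intro x hx
  have := h x hx
  simpa using this

/-- Backward "stay below" barrier. -/
private lemma AcousticWH.barrier_bwd_below {f d : ℝ → ℝ} (hf : ∀ x, HasDerivAt f (d x) x)
    {b s : ℝ} (hb : ∀ x, x ≤ s → f x = b → 0 < d x) (hs : f s ≤ b) :
    ∀ x, x ≤ s → f x ≤ b := by
  have h := AcousticWH.barrier_bwd (f := fun x => -f x) (d := fun x => -d x)
    (fun x => (hf x).neg) (b := -b) (s := s)
    (fun x hx hfx => neg_neg_iff_pos.mpr (hb x hx (by linarith [neg_inj.mp hfx])))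
    (by simpa using hs)
  intro x hx
  have := h x hx
  simpa using this

/-- Global existence for a bounded, globally Lipschitz (in space), time-continuous field. -/
private lemma AcousticWH.exists_global_solution (v : ℝ → ℝ → ℝ) (K : NNReal)
    (hlip : ∀ t, LipschitzWith K (v t)) (hcont : ∀ x, Continuous fun t => v t x)
    (C : ℝ) (hC : 0 < C) (hbd : ∀ t x, |v t x| ≤ C) (c : ℝ) :
    ∃ f : ℝ → ℝ, f 0 = c ∧ ∀ x, HasDerivAt f (v x (f x)) x := by
  have key : ∀ T : ℝ, 0 < T → ∃ f : ℝ → ℝ, f 0 = c ∧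
      ∀ x ∈ Ioo (-T) T, HasDerivAt f (v x (f x)) x := by
    intro T hT
    have hpl : IsPicardLindelof v (tmin := -T) (tmax := T) ⟨0, ⟨by linarith, hT.le⟩⟩ c
        ⟨C * T, by positivity⟩ 0 ⟨C, hC.le⟩ K :=
      { lipschitzOnWith := fun t _ => (hlip t).lipschitzOnWith
        continuousOn := fun x _ => (hcont x).continuousOn
        norm_le := fun t _ x _ => by
          show ‖v t x‖ ≤ C
          simpa [Real.norm_eq_abs] using hbd t x
        mul_max_le := by
          simp [max_self]
          exact le_refl (C * T) }
    obtain ⟨f, hf0, hf⟩ := hpl.exists_eq_forall_mem_Icc_hasDerivWithinAt₀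
    exact ⟨f, hf0, fun x hx =>
      (hf x (Ioo_subset_Icc_self hx)).hasDerivAt (Icc_mem_nhds hx.1 hx.2)⟩
  have uniq : ∀ (T : ℝ), 0 < T → ∀ (f g : ℝ → ℝ),
      (∀ x ∈ Ioo (-T) T, HasDerivAt f (v x (f x)) x) →
      (∀ x ∈ Ioo (-T) T, HasDerivAt g (v x (g x)) x) →
      f 0 = g 0 → Set.EqOn f g (Ioo (-T) T) := by
    intro T hT f g hfd hgd h0
    exact ODE_solution_unique_of_mem_Ioo (v := v) (s := fun _ => univ)
      (fun t _ => (hlip t).lipschitzOnWith) ⟨by linarith, hT⟩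
      (fun t ht => ⟨hfd t ht, trivial⟩) (fun t ht => ⟨hgd t ht, trivial⟩) h0
  have hpos : ∀ n : ℕ, (0:ℝ) < (n:ℝ) + 1 := fun n => by positivity
  set F : ℕ → ℝ → ℝ := fun n => Classical.choose (key ((n:ℝ)+1) (hpos n)) with hF
  have hF0 : ∀ n, F n 0 = c := fun n => (Classical.choose_spec (key ((n:ℝ)+1) (hpos n))).1
  have hFd : ∀ n : ℕ, ∀ x ∈ Ioo (-((n:ℝ)+1)) ((n:ℝ)+1), HasDerivAt (F n) (v x (F n x)) x :=
    fun n => (Classical.choose_spec (key ((n:ℝ)+1) (hpos n))).2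
  have hconsist : ∀ (m n : ℕ) (x : ℝ), |x| < (m:ℝ)+1 → |x| < (n:ℝ)+1 → F m x = F n x := by
    intro m n x hm hn
    set T : ℝ := min ((m:ℝ)+1) ((n:ℝ)+1) with hTdef
    have hT : 0 < T := lt_min (hpos m) (hpos n)
    have hsub1 : Ioo (-T) T ⊆ Ioo (-((m:ℝ)+1)) ((m:ℝ)+1) :=
      Ioo_subset_Ioo (neg_le_neg (min_le_left _ _)) (min_le_left _ _)
    have hsub2 : Ioo (-T) T ⊆ Ioo (-((n:ℝ)+1)) ((n:ℝ)+1) :=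
      Ioo_subset_Ioo (neg_le_neg (min_le_right _ _)) (min_le_right _ _)
    have hx : x ∈ Ioo (-T) T := by
      constructor
      · simp only [hTdef, lt_min_iff, neg_lt]
        constructor <;> [linarith [(abs_lt.mp hm).1]; linarith [(abs_lt.mp hn).1]]
      · simp only [hTdef, lt_min_iff]
        exact ⟨(abs_lt.mp hm).2, (abs_lt.mp hn).2⟩
    exact uniq T hT (F m) (F n) (fun y hy => hFd m y (hsub1 hy))
      (fun y hy => hFd n y (hsub2 hy)) ((hF0 m).trans (hF0 n).symm) hx
  refine ⟨fun x => F (Nat.floor |x|) x, by simpa using hF0 0, ?_⟩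
  intro x
  set m : ℕ := Nat.floor |x| + 1 with hm
  have hxm : |x| < (m:ℝ) := by
    push_cast [hm]
    exact Nat.lt_floor_add_one |x|
  have hxm1 : |x| < (m:ℝ) + 1 := hxm.trans (by linarith)
  have hev : (fun y => F (Nat.floor |y|) y) =ᶠ[nhds x] F m := by
    have hop : IsOpen {y : ℝ | |y| < (m:ℝ)} := isOpen_lt (continuous_abs) continuous_const
    filter_upwards [hop.mem_nhds hxm] with y hy
    exact hconsist (Nat.floor |y|) m y (Nat.lt_floor_add_one |y|) (hy.trans (by linarith))
  have hx_mem : x ∈ Ioo (-((m:ℝ)+1)) ((m:ℝ)+1) := by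
    have := abs_lt.mp hxm1
    exact ⟨this.1, this.2⟩
  have hder : HasDerivAt (F m) (v x (F m x)) x := hFd m x hx_mem
  have heq : F m x = F (Nat.floor |x|) x :=
    (hconsist (Nat.floor |x|) m x (Nat.lt_floor_add_one |x|) hxm1).symm
  have := hder.congr_of_eventuallyEq hev
  rwa [heq] at this

/-- Gronwall-type continuous dependence, both time directions. -/
private lemma AcousticWH.dist_exp_bound (v : ℝ → ℝ → ℝ) (K : NNReal)
    (hlip : ∀ t, LipschitzWith K (v t)) {f g : ℝ → ℝ}
    (hf : ∀ x, HasDerivAt f (v x (f x)) x) (hg : ∀ x, HasDerivAt g (v x (g x)) x)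
    (x : ℝ) : dist (f x) (g x) ≤ dist (f 0) (g 0) * Real.exp (K * |x|) := by
  rcases le_total 0 x with hx | hx
  · have h := dist_le_of_trajectories_ODE (v := v) hlip (a := 0) (b := x)
      (K := K) (δ := dist (f 0) (g 0))
      (fun t _ => (hf t).continuousAt.continuousWithinAt)
      (fun t _ => (hf t).hasDerivWithinAt)
      (fun t _ => (hg t).continuousAt.continuousWithinAt)
      (fun t _ => (hg t).hasDerivWithinAt) le_rfl x ⟨hx, le_rfl⟩
    rw [sub_zero] at h
    rwa [abs_of_nonneg hx]
  · set f1 : ℝ → ℝ := fun t => f (-t) with hf1def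
    set g1 : ℝ → ℝ := fun t => g (-t) with hg1def
    set v1 : ℝ → ℝ → ℝ := fun t y => -(v (-t) y) with hv1def
    have hv1 : ∀ t, LipschitzWith K (v1 t) := by
      intro t
      refine LipschitzWith.of_dist_le_mul fun a b => ?_
      simpa [hv1def, dist_neg_neg] using (hlip (-t)).dist_le_mul a b
    have hf1 : ∀ t, HasDerivAt f1 (v1 t (f1 t)) t := by
      intro t
      have h1 : HasDerivAt (fun s : ℝ => -s) (-1) t := (hasDerivAt_neg t)
      have h2 := (hf (-t)).comp t h1
      simpa [hf1def, hv1def, Function.comp_def, mul_comm] using h2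
    have hg1 : ∀ t, HasDerivAt g1 (v1 t (g1 t)) t := by
      intro t
      have h1 : HasDerivAt (fun s : ℝ => -s) (-1) t := (hasDerivAt_neg t)
      have h2 := (hg (-t)).comp t h1
      simpa [hg1def, hv1def, Function.comp_def, mul_comm] using h2
    have h := dist_le_of_trajectories_ODE (v := v1) hv1 (a := 0) (b := -x)
      (K := K) (δ := dist (f1 0) (g1 0))
      (fun t _ => (hf1 t).continuousAt.continuousWithinAt)
      (fun t _ => (hf1 t).hasDerivWithinAt)
      (fun t _ => (hg1 t).continuousAt.continuousWithinAt)
      (fun t _ => (hg1 t).hasDerivWithinAt) le_rfl (-x) ⟨by linarith, le_rfl⟩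
    simp only [hf1def, hg1def, neg_neg, neg_zero, sub_zero] at h
    rwa [abs_of_nonpos hx]

end AcousticWHhelpers

set_option maxHeartbeats 1000000 in
/-- White-hole case of Theorem 4.1: if `A ≥ a₀ > 0` is C¹ with
`∫ (1+|t|)|A'(t)| dt < ∞` and limits `A(±∞)`, then the ODE `r' = A(x)/r - 1`
has a positive bounded global solution `r₀` (the white hole horizon) with
`r₀(x) → A(±∞)` as `x → ±∞`. -/
theorem acoustic_white_hole_horizon_exists (A : ℝ → ℝ) (hA : ContDiff ℝ 1 A)
    (a₀ : ℝ) (ha₀ : 0 < a₀) (hApos : ∀ x, a₀ ≤ A x)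
    (hint : Integrable (fun t => (1 + |t|) * |deriv A t|))
    (Aplus Aminus : ℝ)
    (hplus : Tendsto A atTop (nhds Aplus))
    (hminus : Tendsto A atBot (nhds Aminus)) :
    ∃ r₀ : ℝ → ℝ,
      (∀ x, 0 < r₀ x) ∧
      (∃ M, ∀ x, r₀ x ≤ M) ∧
      (∀ x, HasDerivAt r₀ (A x / r₀ x - 1) x) ∧
      Tendsto r₀ atTop (nhds Aplus) ∧
      Tendsto r₀ atBot (nhds Aminus) := by
  classical
  have hAc : Continuous A := hA.continuous
  -- a uniform upper bound `M` for `A`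
  obtain ⟨Xp, hXp⟩ : ∃ X : ℝ, ∀ x ≥ X, A x ≤ Aplus + 1 :=
    eventually_atTop.mp (hplus.eventually (eventually_le_nhds (lt_add_one Aplus)))
  obtain ⟨Xm, hXm⟩ : ∃ X : ℝ, ∀ x ≤ X, A x ≤ Aminus + 1 :=
    eventually_atBot.mp (hminus.eventually (eventually_le_nhds (lt_add_one Aminus)))
  obtain ⟨C0, hC0⟩ :=
    (isCompact_Icc (a := Xm) (b := Xp)).exists_bound_of_continuousOn hAc.continuousOn
  set M : ℝ := max C0 (max (Aplus + 1) (Aminus + 1)) with hMdef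
  have hAM : ∀ x, A x ≤ M := by
    intro x
    rcases le_total x Xm with h | h
    · exact le_trans (hXm x h) (le_trans (le_max_right _ _) (le_max_right _ _))
    rcases le_total Xp x with h2 | h2
    · exact le_trans (hXp x h2) (le_trans (le_max_left _ _) (le_max_right _ _))
    · have hb := hC0 x ⟨h, h2⟩
      rw [Real.norm_eq_abs] at hb
      exact le_trans (le_trans (le_abs_self _) hb) (le_max_left _ _)
  have ha₀M : a₀ ≤ M := le_trans (hApos Xm) (hAM Xm)
  have hM0 : 0 < M := lt_of_lt_of_le ha₀ ha₀M
  have hApa : a₀ ≤ Aplus := ge_of_tendsto' hplus hApos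
  have hAma : a₀ ≤ Aminus := ge_of_tendsto' hminus hApos
  have hApM : Aplus ≤ M := le_of_tendsto' hplus hAM
  have hAmM : Aminus ≤ M := le_of_tendsto' hminus hAM
  -- the truncated field
  set hh : ℝ := a₀ / 2 with hhdef
  have hhpos : 0 < hh := by positivity
  set lo : ℝ := 3 * a₀ / 4 with hlodef
  set hi : ℝ := M + 1 with hhidef
  have hlopos : 0 < lo := by positivity
  have hhlo : hh ≤ lo := by rw [hhdef, hlodef]; linarith
  have hhhi : hh ≤ hi := by rw [hhdef, hhidef]; linarith
  have hlohi : lo ≤ hi := by rw [hlodef, hhidef]; linarith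
  have hipos : 0 < hi := by rw [hhidef]; linarith
  set v : ℝ → ℝ → ℝ := fun t r => A t / max r hh - 1 with hvdef
  set K : NNReal := ⟨M / (hh * hh), by positivity⟩ with hKdef
  have hKcoe : (K : ℝ) = M / (hh * hh) := rfl
  have hlip : ∀ t, LipschitzWith K (v t) := by
    intro t
    refine LipschitzWith.of_dist_le_mul fun a b => ?_
    have hp : hh ≤ max a hh := le_max_right _ _
    have hq : hh ≤ max b hh := le_max_right _ _
    have hp0 : 0 < max a hh := lt_of_lt_of_le hhpos hp
    have hq0 : 0 < max b hh := lt_of_lt_of_le hhpos hq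
    have hAt : 0 < A t := lt_of_lt_of_le ha₀ (hApos t)
    have key : v t a - v t b = A t * (max b hh - max a hh) / (max a hh * max b hh) := by
      simp only [hvdef]
      field_simp
      ring
    have habs : dist (v t a) (v t b) = A t * |max b hh - max a hh| / (max a hh * max b hh) := by
      rw [Real.dist_eq, key, abs_div, abs_mul, abs_of_pos hAt, abs_of_pos (mul_pos hp0 hq0)]
    rw [habs, Real.dist_eq]
    have h1 : |max b hh - max a hh| ≤ |a - b| := by
      have := abs_max_sub_max_le_abs b a hh
      rwa [abs_sub_comm b a] at this
    calc A t * |max b hh - max a hh| / (max a hh * max b hh)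
        ≤ M * |a - b| / (hh * hh) := by
          apply div_le_div₀ (by positivity)
            (mul_le_mul (hAM t) h1 (abs_nonneg _) hM0.le) (by positivity)
            (mul_le_mul hp hq hhpos.le (lt_of_lt_of_le hhpos hp).le)
      _ = (K : ℝ) * |a - b| := by rw [hKcoe]; ring
  set Cb : ℝ := M / hh + 1 with hCbdef
  have hCb : 0 < Cb := by positivity
  have hbd : ∀ t r, |v t r| ≤ Cb := by
    intro t r
    have h1 : 0 < max r hh := lt_of_lt_of_le hhpos (le_max_right _ _)
    have hAt : 0 < A t := lt_of_lt_of_le ha₀ (hApos t)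
    have h2 : 0 ≤ A t / max r hh := div_nonneg hAt.le h1.le
    have h3 : A t / max r hh ≤ M / hh := div_le_div₀ hM0.le (hAM t) hhpos (le_max_right _ _)
    simp only [hvdef]
    rw [abs_le]
    constructor
    · rw [hCbdef]; linarith
    · rw [hCbdef]; linarith
  have hcont : ∀ r, Continuous fun t => v t r := by
    intro r
    simp only [hvdef]
    exact (hAc.div_const _).sub continuous_const
  -- the family of global solutions
  have hYex : ∀ c : ℝ, ∃ f : ℝ → ℝ, f 0 = c ∧ ∀ x, HasDerivAt f (v x (f x)) x :=
    fun c => AcousticWH.exists_global_solution v K hlip hcont Cb hCb hbd c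
  choose Y hY0 hYd using hYex
  -- sign of the field at the barriers
  have hsign_lo : ∀ t, 0 < v t lo := by
    intro t
    simp only [hvdef]
    rw [max_eq_left hhlo]
    have h2 : lo < A t := lt_of_lt_of_le (by rw [hlodef]; linarith) (hApos t)
    have := (one_lt_div hlopos).mpr h2
    linarith
  have hsign_hi : ∀ t, v t hi < 0 := by
    intro t
    simp only [hvdef]
    rw [max_eq_left hhhi]
    have h2 : A t < hi := lt_of_le_of_lt (hAM t) (by rw [hhidef]; linarith)
    have := (div_lt_one hipos).mpr h2
    linarith
  -- the shooting sets
  set U : Set ℝ := {c | ∃ s ≤ (0:ℝ), Y c s < lo} with hUdef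
  set V : Set ℝ := {c | ∃ s ≤ (0:ℝ), hi < Y c s} with hVdef
  have hUopen : IsOpen U := by
    rw [Metric.isOpen_iff]
    rintro c ⟨s, hs, hcs⟩
    refine ⟨(lo - Y c s) / Real.exp (K * |s|),
      div_pos (by linarith) (Real.exp_pos _), ?_⟩
    intro c' hc'
    refine ⟨s, hs, ?_⟩
    have hb := AcousticWH.dist_exp_bound v K hlip (hYd c') (hYd c) s
    rw [hY0, hY0] at hb
    rw [Metric.mem_ball] at hc'
    have h2 : dist c' c * Real.exp (K * |s|) < lo - Y c s :=
      (lt_div_iff₀ (Real.exp_pos _)).mp hc'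
    have h3 : |Y c' s - Y c s| < lo - Y c s := by
      rw [← Real.dist_eq]
      exact lt_of_le_of_lt hb h2
    have := (abs_lt.mp h3).2
    linarith
  have hVopen : IsOpen V := by
    rw [Metric.isOpen_iff]
    rintro c ⟨s, hs, hcs⟩
    refine ⟨(Y c s - hi) / Real.exp (K * |s|),
      div_pos (by linarith) (Real.exp_pos _), ?_⟩
    intro c' hc'
    refine ⟨s, hs, ?_⟩
    have hb := AcousticWH.dist_exp_bound v K hlip (hYd c') (hYd c) s
    rw [hY0, hY0] at hb
    rw [Metric.mem_ball] at hc'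
    have h2 : dist c' c * Real.exp (K * |s|) < Y c s - hi :=
      (lt_div_iff₀ (Real.exp_pos _)).mp hc'
    have h3 : |Y c' s - Y c s| < Y c s - hi := by
      rw [← Real.dist_eq]
      exact lt_of_le_of_lt hb h2
    have := (abs_lt.mp h3).1
    linarith
  have hdisj : ∀ c, c ∈ U → c ∈ V → False := by
    rintro c ⟨s1, hs1, h1⟩ ⟨s2, hs2, h2⟩
    rcases le_total s1 s2 with h | h
    · have hbar := AcousticWH.barrier_fwd (f := Y c) (d := fun x => v x (Y c x)) (hYd c)
        (b := hi) (s := s1)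
        (fun x _ hfx => by show v x (Y c x) < 0; rw [hfx]; exact hsign_hi x)
        (le_of_lt (lt_of_lt_of_le h1 hlohi))
      exact absurd h2 (not_lt.mpr (hbar s2 h))
    · have hbar := AcousticWH.barrier_fwd_lower (f := Y c) (d := fun x => v x (Y c x)) (hYd c)
        (b := lo) (s := s2)
        (fun x _ hfx => by show 0 < v x (Y c x); rw [hfx]; exact hsign_lo x)
        (le_of_lt (lt_of_le_of_lt hlohi h2))
      exact absurd h1 (not_lt.mpr (hbar s1 h))
  have hc1 : (lo - 1) ∈ U := ⟨0, le_rfl, by rw [hY0]; linarith⟩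
  have hc2 : (hi + 1) ∈ V := ⟨0, le_rfl, by rw [hY0]; linarith⟩
  have hc12 : lo - 1 ≤ hi + 1 := by linarith
  have hnotcover : ¬ (Set.Icc (lo - 1) (hi + 1) ⊆ U ∪ V) := by
    intro hsub
    obtain ⟨c, hc⟩ := isPreconnected_Icc (u := U) (v := V) hUopen hVopen hsub
      ⟨lo - 1, ⟨le_rfl, hc12⟩, hc1⟩ ⟨hi + 1, ⟨hc12, le_rfl⟩, hc2⟩
    exact hdisj c hc.2.1 hc.2.2
  obtain ⟨c, -, hcUV⟩ := Set.not_subset.mp hnotcover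
  rw [Set.mem_union] at hcUV
  push_neg at hcUV
  obtain ⟨hcU, hcV⟩ := hcUV
  set r : ℝ → ℝ := Y c with hrdef
  have hUc : ∀ s, s ≤ (0:ℝ) → lo ≤ r s := by
    intro s hs
    by_contra hcon
    push_neg at hcon
    exact hcU ⟨s, hs, hcon⟩
  have hVc : ∀ s, s ≤ (0:ℝ) → r s ≤ hi := by
    intro s hs
    by_contra hcon
    push_neg at hcon
    exact hcV ⟨s, hs, hcon⟩
  have hrlo : ∀ x, lo ≤ r x := by
    intro x
    rcases le_total x 0 with h | h
    · exact hUc x h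
    · exact AcousticWH.barrier_fwd_lower (f := r) (d := fun x => v x (r x)) (hYd c)
        (b := lo) (s := 0) (fun y _ hfy => by show 0 < v y (r y); rw [hfy]; exact hsign_lo y)
        (hUc 0 le_rfl) x h
  have hrhi : ∀ x, r x ≤ hi := by
    intro x
    rcases le_total x 0 with h | h
    · exact hVc x h
    · exact AcousticWH.barrier_fwd (f := r) (d := fun x => v x (r x)) (hYd c)
        (b := hi) (s := 0) (fun y _ hfy => by show v y (r y) < 0; rw [hfy]; exact hsign_hi y)
        (hVc 0 le_rfl) x h
  have hrpos : ∀ x, 0 < r x := fun x => lt_of_lt_of_le hlopos (hrlo x)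
  have hveq : ∀ x, v x (r x) = A x / r x - 1 := by
    intro x
    simp only [hvdef]
    rw [max_eq_left (le_trans hhlo (hrlo x))]
  have hrd : ∀ x, HasDerivAt r (A x / r x - 1) x := by
    intro x
    have := hYd c x
    rwa [hveq x] at this
  refine ⟨r, hrpos, ⟨hi, hrhi⟩, hrd, ?_, ?_⟩
  · -- limit at +∞
    rw [Metric.tendsto_nhds]
    intro ε hε
    set e : ℝ := min (ε / 2) (a₀ / 2) with hedef
    have he0 : 0 < e := lt_min (by linarith) (by linarith)
    have heε : e < ε := lt_of_le_of_lt (min_le_left _ _) (by linarith)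
    have hea : e ≤ a₀ / 2 := min_le_right _ _
    obtain ⟨X, hX⟩ : ∃ X : ℝ, ∀ x ≥ X, |A x - Aplus| ≤ e / 2 := by
      have h2 := (Metric.tendsto_nhds.mp hplus) (e / 2) (by linarith)
      rw [eventually_atTop] at h2
      obtain ⟨X, hX⟩ := h2
      exact ⟨X, fun x hx => le_of_lt (by simpa [Real.dist_eq] using hX x hx)⟩
    set b1 : ℝ := Aplus + e with hb1def
    have hb1pos : 0 < b1 := by rw [hb1def]; linarith
    set δ1 : ℝ := (e / 2) / b1 with hδ1def
    have hδ1 : 0 < δ1 := div_pos (by linarith) hb1pos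
    have hdrift1 : ∀ x, X ≤ x → b1 ≤ r x → A x / r x - 1 ≤ -δ1 := by
      intro x hx hr
      have hAx : A x ≤ Aplus + e / 2 := by
        have := (abs_le.mp (hX x hx)).2
        linarith
      have h1 : A x / r x ≤ (Aplus + e / 2) / b1 :=
        div_le_div₀ (by linarith) hAx hb1pos hr
      have h2 : (Aplus + e / 2) / b1 = 1 - δ1 := by
        rw [hδ1def, hb1def]
        have hne : Aplus + e ≠ 0 := (by linarith : (0:ℝ) < Aplus + e).ne'
        field_simp
        ring
      linarith
    have hstep1 : ∃ x1, X ≤ x1 ∧ r x1 ≤ b1 := by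
      by_contra hcon
      push_neg at hcon
      set x2 : ℝ := X + (hi + 1) / δ1 with hx2def
      have hX2 : X < x2 := by
        rw [hx2def]
        have : 0 < (hi + 1) / δ1 := div_pos (by linarith) hδ1
        linarith
      obtain ⟨ξ, hξ, hξ2⟩ := AcousticWH.mvt hrd hX2
      have h3 : A ξ / r ξ - 1 ≤ -δ1 :=
        hdrift1 ξ hξ.1.le (hcon ξ hξ.1.le).le
      have hposd : 0 < x2 - X := by linarith
      have h4 : r x2 - r X ≤ -δ1 * (x2 - X) := by
        rw [hξ2] at h3
        calc r x2 - r X = (r x2 - r X) / (x2 - X) * (x2 - X) := by field_simp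
          _ ≤ -δ1 * (x2 - X) := by
              apply mul_le_mul_of_nonneg_right h3 hposd.le
      have h5 : -δ1 * (x2 - X) = -(hi + 1) := by
        rw [hx2def]
        field_simp
        try ring
      have h6 := hrpos x2
      have h7 := hrhi X
      rw [h5] at h4
      linarith
    obtain ⟨x1, hx1X, hx1⟩ := hstep1
    have hub : ∀ x, x1 ≤ x → r x ≤ b1 :=
      AcousticWH.barrier_fwd (f := r) (d := fun x => A x / r x - 1) hrd (b := b1) (s := x1)
        (fun x hx hfx =>
          lt_of_le_of_lt (hdrift1 x (le_trans hx1X hx) (le_of_eq hfx.symm)) (by linarith))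
        hx1
    set b2 : ℝ := Aplus - e with hb2def
    have hb2pos : 0 < b2 := by rw [hb2def]; linarith
    set δ2 : ℝ := (e / 2) / b2 with hδ2def
    have hδ2 : 0 < δ2 := div_pos (by linarith) hb2pos
    have hdrift2 : ∀ x, X ≤ x → r x ≤ b2 → δ2 ≤ A x / r x - 1 := by
      intro x hx hr
      have hAx : Aplus - e / 2 ≤ A x := by
        have := (abs_le.mp (hX x hx)).1
        linarith
      have hrx : 0 < r x := hrpos x
      have h1 : (Aplus - e / 2) / b2 ≤ A x / r x :=
        div_le_div₀ (lt_of_lt_of_le ha₀ (hApos x)).le hAx hrx hr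
      have h2 : (Aplus - e / 2) / b2 = 1 + δ2 := by
        rw [hδ2def, hb2def]
        have hne : Aplus - e ≠ 0 := (by linarith : (0:ℝ) < Aplus - e).ne'
        field_simp
        ring
      linarith
    have hstep2 : ∃ x1', X ≤ x1' ∧ b2 ≤ r x1' := by
      by_contra hcon
      push_neg at hcon
      set x2 : ℝ := X + (hi + 1) / δ2 with hx2def
      have hX2 : X < x2 := by
        rw [hx2def]
        have : 0 < (hi + 1) / δ2 := div_pos (by linarith) hδ2
        linarith
      obtain ⟨ξ, hξ, hξ2⟩ := AcousticWH.mvt hrd hX2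
      have h3 : δ2 ≤ A ξ / r ξ - 1 :=
        hdrift2 ξ hξ.1.le (hcon ξ hξ.1.le).le
      have hposd : 0 < x2 - X := by linarith
      have h4 : δ2 * (x2 - X) ≤ r x2 - r X := by
        rw [hξ2] at h3
        calc δ2 * (x2 - X) ≤ (r x2 - r X) / (x2 - X) * (x2 - X) :=
              mul_le_mul_of_nonneg_right h3 hposd.le
          _ = r x2 - r X := by field_simp
      have h5 : δ2 * (x2 - X) = hi + 1 := by
        rw [hx2def]
        field_simp
        try ring
      have h6 := hrhi x2
      have h7 := hrlo X
      rw [h5] at h4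
      linarith
    obtain ⟨x1', hx1'X, hx1'⟩ := hstep2
    have hlb : ∀ x, x1' ≤ x → b2 ≤ r x :=
      AcousticWH.barrier_fwd_lower (f := r) (d := fun x => A x / r x - 1) hrd
        (b := b2) (s := x1')
        (fun x hx hfx =>
          lt_of_lt_of_le hδ2 (hdrift2 x (le_trans hx1'X hx) (le_of_eq hfx)))
        hx1'
    rw [eventually_atTop]
    refine ⟨max x1 x1', fun x hx => ?_⟩
    have h1 := hub x (le_trans (le_max_left _ _) hx)
    have h2 := hlb x (le_trans (le_max_right _ _) hx)
    rw [Real.dist_eq, abs_lt]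
    constructor
    · rw [hb2def] at h2; linarith
    · rw [hb1def] at h1; linarith
  · -- limit at -∞
    rw [Metric.tendsto_nhds]
    intro ε hε
    set e : ℝ := min (ε / 2) (a₀ / 2) with hedef
    have he0 : 0 < e := lt_min (by linarith) (by linarith)
    have heε : e < ε := lt_of_le_of_lt (min_le_left _ _) (by linarith)
    have hea : e ≤ a₀ / 2 := min_le_right _ _
    obtain ⟨X, hX⟩ : ∃ X : ℝ, ∀ x ≤ X, |A x - Aminus| ≤ e / 2 := by
      have h2 := (Metric.tendsto_nhds.mp hminus) (e / 2) (by linarith)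
      rw [eventually_atBot] at h2
      obtain ⟨X, hX⟩ := h2
      exact ⟨X, fun x hx => le_of_lt (by simpa [Real.dist_eq] using hX x hx)⟩
    set b1 : ℝ := Aminus + e with hb1def
    have hb1pos : 0 < b1 := by rw [hb1def]; linarith
    set δ1 : ℝ := (e / 2) / b1 with hδ1def
    have hδ1 : 0 < δ1 := div_pos (by linarith) hb1pos
    have hdrift1 : ∀ x, x ≤ X → b1 ≤ r x → A x / r x - 1 ≤ -δ1 := by
      intro x hx hr
      have hAx : A x ≤ Aminus + e / 2 := by
        have := (abs_le.mp (hX x hx)).2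
        linarith
      have h1 : A x / r x ≤ (Aminus + e / 2) / b1 :=
        div_le_div₀ (by linarith) hAx hb1pos hr
      have h2 : (Aminus + e / 2) / b1 = 1 - δ1 := by
        rw [hδ1def, hb1def]
        have hne : Aminus + e ≠ 0 := (by linarith : (0:ℝ) < Aminus + e).ne'
        field_simp
        ring
      linarith
    have hclaim1 : ∀ x, x ≤ X → r x ≤ b1 := by
      intro x0 hx0
      by_contra hcon
      push_neg at hcon
      have habove : ∀ x, x ≤ x0 → b1 ≤ r x :=
        AcousticWH.barrier_bwd (f := r) (d := fun x => A x / r x - 1) hrd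
          (b := b1) (s := x0)
          (fun x hx hfx =>
            lt_of_le_of_lt (hdrift1 x (le_trans hx hx0) (le_of_eq hfx.symm)) (by linarith))
          hcon.le
      set x3 : ℝ := x0 - (hi + 1) / δ1 with hx3def
      have hX3 : x3 < x0 := by
        rw [hx3def]
        have : 0 < (hi + 1) / δ1 := div_pos (by linarith) hδ1
        linarith
      obtain ⟨ξ, hξ, hξ2⟩ := AcousticWH.mvt hrd hX3
      have h3 : A ξ / r ξ - 1 ≤ -δ1 :=
        hdrift1 ξ (le_trans hξ.2.le hx0) (habove ξ hξ.2.le)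
      have hposd : 0 < x0 - x3 := by linarith
      have h4 : r x0 - r x3 ≤ -δ1 * (x0 - x3) := by
        rw [hξ2] at h3
        calc r x0 - r x3 = (r x0 - r x3) / (x0 - x3) * (x0 - x3) := by field_simp
          _ ≤ -δ1 * (x0 - x3) := mul_le_mul_of_nonneg_right h3 hposd.le
      have h5 : -δ1 * (x0 - x3) = -(hi + 1) := by
        rw [hx3def]
        field_simp
        try ring
      have h6 := hrhi x3
      have h7 := hrpos x0
      rw [h5] at h4
      linarith
    set b2 : ℝ := Aminus - e with hb2def
    have hb2pos : 0 < b2 := by rw [hb2def]; linarith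
    set δ2 : ℝ := (e / 2) / b2 with hδ2def
    have hδ2 : 0 < δ2 := div_pos (by linarith) hb2pos
    have hdrift2 : ∀ x, x ≤ X → r x ≤ b2 → δ2 ≤ A x / r x - 1 := by
      intro x hx hr
      have hAx : Aminus - e / 2 ≤ A x := by
        have := (abs_le.mp (hX x hx)).1
        linarith
      have hrx : 0 < r x := hrpos x
      have h1 : (Aminus - e / 2) / b2 ≤ A x / r x :=
        div_le_div₀ (lt_of_lt_of_le ha₀ (hApos x)).le hAx hrx hr
      have h2 : (Aminus - e / 2) / b2 = 1 + δ2 := by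
        rw [hδ2def, hb2def]
        have hne : Aminus - e ≠ 0 := (by linarith : (0:ℝ) < Aminus - e).ne'
        field_simp
        ring
      linarith
    have hclaim2 : ∀ x, x ≤ X → b2 ≤ r x := by
      intro x0 hx0
      by_contra hcon
      push_neg at hcon
      have hbelow : ∀ x, x ≤ x0 → r x ≤ b2 :=
        AcousticWH.barrier_bwd_below (f := r) (d := fun x => A x / r x - 1) hrd
          (b := b2) (s := x0)
          (fun x hx hfx =>
            lt_of_lt_of_le hδ2 (hdrift2 x (le_trans hx hx0) (le_of_eq hfx)))
          hcon.le
      set x3 : ℝ := x0 - (hi + 1) / δ2 with hx3def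
      have hX3 : x3 < x0 := by
        rw [hx3def]
        have : 0 < (hi + 1) / δ2 := div_pos (by linarith) hδ2
        linarith
      obtain ⟨ξ, hξ, hξ2⟩ := AcousticWH.mvt hrd hX3
      have h3 : δ2 ≤ A ξ / r ξ - 1 :=
        hdrift2 ξ (le_trans hξ.2.le hx0) (hbelow ξ hξ.2.le)
      have hposd : 0 < x0 - x3 := by linarith
      have h4 : δ2 * (x0 - x3) ≤ r x0 - r x3 := by
        rw [hξ2] at h3
        calc δ2 * (x0 - x3) ≤ (r x0 - r x3) / (x0 - x3) * (x0 - x3) :=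
              mul_le_mul_of_nonneg_right h3 hposd.le
          _ = r x0 - r x3 := by field_simp
      have h5 : δ2 * (x0 - x3) = hi + 1 := by
        rw [hx3def]
        field_simp
        try ring
      have h6 := hrpos x3
      have h7 : r x0 ≤ b2 := hbelow x0 le_rfl
      have h8 : b2 ≤ M := by rw [hb2def]; linarith
      rw [h5] at h4
      rw [hhidef] at *
      linarith
    rw [eventually_atBot]
    refine ⟨X, fun x hx => ?_⟩
    have h1 := hclaim1 x hx
    have h2 := hclaim2 x hx
    rw [Real.dist_eq, abs_lt]
    constructor
    · rw [hb2def] at h2; linarith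
    · rw [hb1def] at h1; linarith
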